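/- arXiv:2005.01067 — 2 statements merged into one kernel-verified Lean document; each statement's English description precedes it below -/
import Mathlib

section
/- Let s, n, N be positive integers with n ≥ 2 and s·n even. Then for every j ∈ {0,1,...,N−1}, M_{s,n,N}(j) = (2(2i)^{sn}/N) · Σ_{r=1}^{⌊N/2⌋} cos(πr(2j − N_{s,n})/N) · ∏_{a=1}^{n} sin^s(πar/N), where i is the imaginary unit and N_{s,n} = s·n(n+1)/2. -/
/-- `T s n` is the polynomial `∏_{j=1}^{n} (1 - q^j)^s`. -/
noncomputable def T (s n : ℕ) : Polynomial ℤ :=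
  ∏ j ∈ Finset.Icc 1 n, (1 - Polynomial.X ^ j) ^ s

/-- `Nsn s n = s·n(n+1)/2`, the degree of `T s n`. -/
def Nsn (s n : ℕ) : ℕ := s * n * (n + 1) / 2

/-- `M s n N j = Σ_{0 ≤ i ≤ N_{s,n}, i ≡ j (mod N)} t_{i,s,n}`. -/
noncomputable def M (s n N j : ℕ) : ℤ :=
  ∑ i ∈ (Finset.range (Nsn s n + 1)).filter (fun i => i % N = j), (T s n).coeff i


lemma sin_exp (z : ℂ) : 1 - Complex.exp (2*z*Complex.I) = -2*Complex.I*Complex.sin z * Complex.exp (z*Complex.I) := by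
  rw [Complex.sin]
  have h1 : Complex.exp (-z*Complex.I) * Complex.exp (z*Complex.I) = 1 := by
    rw [← Complex.exp_add]; ring_nf; exact Complex.exp_zero
  have h2 : Complex.exp (z*Complex.I) * Complex.exp (z*Complex.I) = Complex.exp (2*z*Complex.I) := by
    rw [← Complex.exp_add]; ring_nf
  have h3 : Complex.I^2 = -1 := Complex.I_sq
  linear_combination -h1 + h2 + ((Complex.exp (-z*Complex.I) - Complex.exp (z*Complex.I)) * Complex.exp (z*Complex.I)) * h3

lemma sum_Icc_id (n : ℕ) : (∑ a ∈ Finset.Icc 1 n, a) * 2 = n * (n + 1) := by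
  induction n with
  | zero => simp
  | succ k ih => rw [Finset.sum_Icc_succ_top (by omega)]; nlinarith [ih]

lemma Nsn_two (s n : ℕ) : Nsn s n * 2 = s * n * (n + 1) := by
  obtain ⟨k, hk⟩ := Nat.even_mul_succ_self n
  have h : s * n * (n + 1) = 2 * (s * k) := by rw [mul_assoc, hk]; ring
  unfold Nsn; omega

lemma sum_sIcc (s n : ℕ) : ∑ a ∈ Finset.Icc 1 n, s * a = Nsn s n := by
  have h1 := sum_Icc_id n
  have h2 := Nsn_two s n
  have h3 : (∑ a ∈ Finset.Icc 1 n, s * a) * 2 = s * ((∑ a ∈ Finset.Icc 1 n, a) * 2) := by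
    rw [← Finset.mul_sum]; ring
  rw [h1] at h3
  have : (∑ a ∈ Finset.Icc 1 n, s * a) * 2 = Nsn s n * 2 := by rw [h3, h2]; ring
  omega

lemma natDeg_T (s n : ℕ) : (T s n).natDegree ≤ Nsn s n := by
  calc (T s n).natDegree ≤ ∑ a ∈ Finset.Icc 1 n, (((1 - Polynomial.X ^ a : Polynomial ℤ)) ^ s).natDegree := by
        unfold T; exact Polynomial.natDegree_prod_le _ _
    _ ≤ ∑ a ∈ Finset.Icc 1 n, s * a := by
        refine Finset.sum_le_sum fun a _ => ?_
        refine le_trans Polynomial.natDegree_pow_le (Nat.mul_le_mul_left s ?_)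
        refine le_trans (Polynomial.natDegree_sub_le _ _) ?_
        simp [Polynomial.natDegree_X_pow]
    _ = Nsn s n := sum_sIcc s n

lemma evalT (s n : ℕ) (z : ℂ) :
    ∑ i ∈ Finset.range (Nsn s n + 1), ((T s n).coeff i : ℂ) * z ^ i
      = ∏ a ∈ Finset.Icc 1 n, (1 - z ^ a) ^ s := by
  have h1 : Polynomial.aeval z (T s n) = ∏ a ∈ Finset.Icc 1 n, (1 - z ^ a) ^ s := by
    simp [T, map_prod]
  rw [← h1, Polynomial.aeval_def,
    Polynomial.eval₂_eq_sum_range' _ (lt_of_le_of_lt (natDeg_T s n) (Nat.lt_succ_self _)) z]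
  simp

noncomputable def zet (N : ℕ) : ℂ := Complex.exp (2*Real.pi*Complex.I/N)
noncomputable def cc (s n N j : ℕ) (r : ℕ) : ℂ :=
  ∑ i ∈ Finset.range (Nsn s n + 1), ((T s n).coeff i : ℂ) * (zet N) ^ (((i:ℤ) - (j:ℤ)) * r)

lemma zet_ne (N : ℕ) : zet N ≠ 0 := Complex.exp_ne_zero _

lemma hdvd_iff (N i j : ℕ) (hj : j < N) : ((N:ℤ) ∣ ((i:ℤ) - (j:ℤ))) ↔ i % N = j := by
  rw [← Int.modEq_iff_dvd, Int.ModEq, ← Int.natCast_mod, ← Int.natCast_mod,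
    Nat.mod_eq_of_lt hj, Int.natCast_inj]
  exact eq_comm

lemma filter_step (s n N j : ℕ) (hN : 0 < N) (hj : j < N) :
    ∑ r ∈ Finset.range N, cc s n N j r = N * (M s n N j : ℂ) := by
  have hζ : IsPrimitiveRoot (zet N) N := Complex.isPrimitiveRoot_exp N hN.ne'
  have key : ∀ i : ℕ, ∑ r ∈ Finset.range N, (zet N) ^ (((i:ℤ)-j)*r)
      = if i % N = j then (N:ℂ) else 0 := by
    intro i
    have hrw : ∀ r : ℕ, (zet N) ^ (((i:ℤ)-j)*(r:ℕ)) = ((zet N) ^ ((i:ℤ)-j))^r := by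
      intro r; rw [← zpow_natCast ((zet N) ^ ((i:ℤ)-j)), ← zpow_mul]
    simp_rw [hrw]
    by_cases hcase : i % N = j
    · have hone : (zet N) ^ ((i:ℤ)-j) = 1 :=
        (hζ.zpow_eq_one_iff_dvd _).mpr ((hdvd_iff N i j hj).mpr hcase)
      simp [hone, hcase]
    · have hne : (zet N) ^ ((i:ℤ)-j) ≠ 1 :=
        fun h => hcase ((hdvd_iff N i j hj).mp ((hζ.zpow_eq_one_iff_dvd _).mp h))
      rw [geom_sum_eq hne, if_neg hcase]
      have hNone : ((zet N) ^ ((i:ℤ)-j))^N = 1 := by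
        rw [← zpow_natCast, ← zpow_mul, mul_comm, zpow_mul, zpow_natCast, hζ.pow_eq_one, one_zpow]
      rw [hNone]; simp
  have hM : (M s n N j : ℂ) = ∑ i ∈ (Finset.range (Nsn s n + 1)).filter
      (fun i => i % N = j), ((T s n).coeff i : ℂ) := by
    rw [M]; push_cast; ring
  simp only [cc]
  rw [hM, Finset.sum_filter, Finset.mul_sum]
  rw [Finset.sum_comm]
  refine Finset.sum_congr rfl fun i _ => ?_
  rw [← Finset.mul_sum, key i]
  split <;> simp [mul_comm]

noncomputable def P (s n N : ℕ) (r : ℕ) : ℂ :=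
  ∏ a ∈ Finset.Icc 1 n, ((Real.sin (Real.pi*a*r/N) : ℝ) : ℂ)^s
noncomputable def xr (s n N j : ℕ) (r : ℕ) : ℝ := Real.pi*r*((Nsn s n : ℝ) - 2*j)/N


lemma sum_real (s n N : ℕ) (r : ℕ) (hN : 0 < N) :
    ∑ a ∈ Finset.Icc 1 n, (s:ℝ)*(Real.pi*a*r/N) = Real.pi*r*(Nsn s n : ℝ)/N := by
  have h : (∑ a ∈ Finset.Icc 1 n, ((s*a : ℕ) : ℝ)) = ((Nsn s n : ℕ) : ℝ) := by
    rw [← Nat.cast_sum, sum_sIcc]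
  calc ∑ a ∈ Finset.Icc 1 n, (s:ℝ)*(Real.pi*a*r/N)
      = (Real.pi*r/N) * ∑ a ∈ Finset.Icc 1 n, ((s*a:ℕ):ℝ) := by
        rw [Finset.mul_sum]; refine Finset.sum_congr rfl fun a _ => ?_; push_cast; ring
    _ = Real.pi*r*(Nsn s n : ℝ)/N := by rw [h]; ring

lemma eval_step (s n N j : ℕ) (hN : 0 < N) (r : ℕ) :
    cc s n N j r = (-2*Complex.I)^(s*n) *
      Complex.exp ((xr s n N j r : ℝ) * Complex.I) * P s n N r := by
  have hNR : (N:ℝ) ≠ 0 := Nat.cast_ne_zero.mpr hN.ne'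
  have e1 : cc s n N j r = (zet N) ^ (-(j:ℤ)*r) *
      ∑ i ∈ Finset.range (Nsn s n + 1), ((T s n).coeff i : ℂ) * ((zet N)^r)^i := by
    rw [cc, Finset.mul_sum]
    refine Finset.sum_congr rfl fun i _ => ?_
    have h2 : ((zet N)^r)^i = (zet N) ^ ((i:ℤ)*r) := by
      rw [← pow_mul, ← zpow_natCast (zet N) (r*i)]; congr 1; push_cast; ring
    rw [show ((i:ℤ)-j)*(r:ℤ) = -(j:ℤ)*r + (i:ℤ)*r by ring, zpow_add₀ (zet_ne N), h2]
    ring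
  rw [e1, evalT s n ((zet N)^r)]
  have e2 : ∀ a ∈ Finset.Icc 1 n, (1 - ((zet N)^r)^a)^s =
      ((-2*Complex.I)^s * ((Real.sin (Real.pi*a*r/N) : ℝ) : ℂ)^s) *
      Complex.exp (((Real.pi*a*r/N : ℝ) : ℂ) * Complex.I)^s := by
    intro a _
    have h3 : ((zet N)^r)^a = Complex.exp (2*((Real.pi*a*r/N : ℝ):ℂ)*Complex.I) := by
      rw [← pow_mul, zet, ← Complex.exp_nat_mul]
      congr 1; push_cast; field_simp
    rw [h3, sin_exp (((Real.pi*a*r/N : ℝ)):ℂ), ← Complex.ofReal_sin, mul_pow, mul_pow]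
  rw [Finset.prod_congr rfl e2, Finset.prod_mul_distrib, Finset.prod_mul_distrib,
    Finset.prod_const, ← pow_mul]
  have e3 : ∏ a ∈ Finset.Icc 1 n, Complex.exp (((Real.pi*a*r/N : ℝ):ℂ) * Complex.I)^s =
      Complex.exp (((Real.pi*r*(Nsn s n : ℝ)/N : ℝ):ℂ) * Complex.I) := by
    have h4 : ∀ a ∈ Finset.Icc 1 n, Complex.exp (((Real.pi*a*r/N : ℝ):ℂ) * Complex.I)^s
        = Complex.exp (((s:ℝ)*(Real.pi*a*r/N) : ℝ) * Complex.I) := by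
      intro a _
      rw [← Complex.exp_nat_mul]; congr 1; push_cast; ring
    rw [Finset.prod_congr rfl h4, ← Complex.exp_sum]
    congr 1
    rw [← Finset.sum_mul]
    congr 1
    rw [← Complex.ofReal_sum]
    rw [sum_real s n N r hN]
  have e4 : (zet N) ^ (-(j:ℤ)*r) = Complex.exp (((-(j:ℤ)*r : ℤ) : ℂ) * (2*Real.pi*Complex.I/N)) := by
    rw [zet, ← Complex.exp_int_mul]
  rw [e3, e4, P, show (Finset.Icc 1 n).card = n from by simp]
  have e5 : Complex.exp ((((-(j:ℤ)*r : ℤ)):ℂ) * (2*Real.pi*Complex.I/N)) *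
      Complex.exp (((Real.pi*r*(Nsn s n:ℝ)/N : ℝ):ℂ) * Complex.I)
      = Complex.exp ((xr s n N j r : ℝ) * Complex.I) := by
    rw [← Complex.exp_add]; congr 1; rw [xr]; push_cast; field_simp; ring
  rw [← e5]
  ring

lemma conj_zet (N : ℕ) : (starRingEnd ℂ) (zet N) = (zet N)⁻¹ := by
  rw [zet, ← Complex.exp_conj, ← Complex.exp_neg]
  congr 1
  simp [map_div₀, Complex.conj_I, map_ofNat]
  ring

lemma conj_step (s n N j : ℕ) (hN : 0 < N) (r : ℕ) (hr : r ≤ N) :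
    cc s n N j (N - r) = (starRingEnd ℂ) (cc s n N j r) := by
  have hζ : IsPrimitiveRoot (zet N) N := Complex.isPrimitiveRoot_exp N hN.ne'
  simp only [cc, map_sum, map_mul]
  refine Finset.sum_congr rfl fun i _ => ?_
  congr 1
  · simp
  · rw [map_zpow₀, conj_zet, inv_zpow, ← zpow_neg]
    rw [show (((N - r : ℕ)):ℤ) = (N:ℤ) - r from by omega]
    rw [show ((i:ℤ)-j)*((N:ℤ)-r) = (N:ℤ)*((i:ℤ)-j) + -(((i:ℤ)-j)*r) from by ring]
    rw [zpow_add₀ (zet_ne N), zpow_mul, zpow_natCast, hζ.pow_eq_one, one_zpow, one_mul]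

lemma conj_P (s n N : ℕ) (r : ℕ) : (starRingEnd ℂ) (P s n N r) = P s n N r := by
  simp only [P, map_prod, map_pow, Complex.conj_ofReal]

lemma d_step (s n N j : ℕ) (hN : 0 < N) (hodd : Even (s*n)) (r : ℕ) (hr : r ≤ N) :
    cc s n N j (N - r) = (-2*Complex.I)^(s*n) *
      Complex.exp (-(xr s n N j r : ℝ) * Complex.I) * P s n N r := by
  rw [conj_step s n N j hN r hr, eval_step s n N j hN r, map_mul, map_mul, conj_P, map_pow]
  congr 2
  · rw [show (starRingEnd ℂ) (-2*Complex.I) = 2*Complex.I from by simp [map_mul, map_neg, map_ofNat, Complex.conj_I]]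
    rw [show ((-2*Complex.I):ℂ) = -(2*Complex.I) from by ring, hodd.neg_pow]
  · rw [← Complex.exp_conj]
    congr 1
    simp [Complex.conj_I, Complex.conj_ofReal]

lemma P_zero (s n N : ℕ) (hs : 0 < s) (hn : 1 ≤ n) : P s n N 0 = 0 := by
  apply Finset.prod_eq_zero (Finset.mem_Icc.mpr ⟨le_refl 1, hn⟩)
  simp [zero_pow hs.ne']

lemma P_half (s n N r : ℕ) (hs : 0 < s) (hn : 2 ≤ n) (hN : 0 < N) (h2r : 2*r = N) :
    P s n N r = 0 := by
  apply Finset.prod_eq_zero (i := 2) (Finset.mem_Icc.mpr ⟨by norm_num, hn⟩)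
  have hNR : (N:ℝ) ≠ 0 := Nat.cast_ne_zero.mpr hN.ne'
  have h : (2:ℝ)*r = N := by exact_mod_cast congrArg (Nat.cast : ℕ → ℝ) h2r
  rw [show Real.pi*(2:ℕ)*r/N = Real.pi from by push_cast; field_simp; linear_combination h]
  simp [Real.sin_pi, zero_pow hs.ne']

lemma sum_step (s n N j : ℕ) (hs : 0 < s) (hn : 2 ≤ n) (hN : 0 < N) (hodd : Even (s*n)) :
    ∑ r ∈ Finset.range N, cc s n N j r =
    ∑ r ∈ Finset.Icc 1 (N/2), ((-2*Complex.I)^(s*n) *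
      (Complex.exp ((xr s n N j r : ℝ) * Complex.I) +
       Complex.exp (-(xr s n N j r : ℝ) * Complex.I)) * P s n N r) := by
  have hc0 : cc s n N j 0 = 0 := by
    rw [eval_step s n N j hN 0, P_zero s n N hs (by omega)]; ring
  rw [show Finset.range N = insert 0 (Finset.Icc 1 (N-1)) from by ext x; simp; omega]
  rw [Finset.sum_insert (by simp), hc0, zero_add]
  have hdisj : Disjoint (Finset.Icc 1 (N/2)) (Finset.Icc (N/2+1) (N-1)) :=
    Finset.disjoint_left.mpr (fun x hx hx2 => by simp at hx hx2; omega)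
  rw [show Finset.Icc 1 (N-1) = Finset.Icc 1 (N/2) ∪ Finset.Icc (N/2+1) (N-1) from by
    ext x; simp; omega]
  rw [Finset.sum_union hdisj]
  have hre : ∑ r ∈ Finset.Icc (N/2+1) (N-1), cc s n N j r
      = ∑ r ∈ Finset.Icc 1 (N-1-N/2), cc s n N j (N - r) := by
    apply Finset.sum_nbij' (i := fun r => N - r) (j := fun r => N - r)
    · intro a ha; simp at ha ⊢; omega
    · intro a ha; simp at ha ⊢; omega
    · intro a ha; simp at ha; omega
    · intro a ha; simp at ha; omega
    · intro a ha; simp at ha; congr 1; omega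
  rw [hre]
  have hsub : Finset.Icc 1 (N-1-N/2) ⊆ Finset.Icc 1 (N/2) := by
    intro x hx; simp at hx ⊢; omega
  have hzero : ∀ x ∈ Finset.Icc 1 (N/2), x ∉ Finset.Icc 1 (N-1-N/2) →
      cc s n N j (N - x) = 0 := by
    intro x hx hx2
    have h2x : 2*x = N := by simp at hx hx2; omega
    rw [d_step s n N j hN hodd x (by omega), P_half s n N x hs hn hN h2x]; ring
  rw [Finset.sum_subset hsub hzero, ← Finset.sum_add_distrib]
  refine Finset.sum_congr rfl fun r hr => ?_
  rw [eval_step s n N j hN r, d_step s n N j hN hodd r (by simp at hr; omega)]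
  ring

lemma exp_add_exp_neg (x : ℝ) :
    Complex.exp ((x:ℂ)*Complex.I) + Complex.exp (-(x:ℂ)*Complex.I) = 2*((Real.cos x : ℝ):ℂ) := by
  rw [Complex.ofReal_cos, Complex.cos]
  ring


open Real Complex in
/-- Theorem (main0000, even case): for `s·n` even, `n ≥ 2`, `N ≥ 1` and `0 ≤ j < N`,
`M_{s,n,N}(j) = (2(2i)^{sn}/N) Σ_{r=1}^{⌊N/2⌋} cos(πr(2j - N_{s,n})/N) ∏_{a=1}^{n} sin^s(πar/N)`. -/
theorem stmt2 (s n N : ℕ) (hs : 0 < s) (hn : 2 ≤ n) (hN : 0 < N) (hodd : Even (s * n))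
    (j : ℕ) (hj : j < N) :
    (M s n N j : ℂ) =
      (2 * (2 * Complex.I) ^ (s * n) / (N : ℂ)) *
        ∑ r ∈ Finset.Icc 1 (N / 2),
          ((Real.cos (Real.pi * r * (2 * (j : ℝ) - (Nsn s n : ℝ)) / N) : ℂ) *
            ∏ a ∈ Finset.Icc 1 n, (Real.sin (Real.pi * a * r / N) : ℂ) ^ s) := by

  have hNC : (N:ℂ) ≠ 0 := Nat.cast_ne_zero.mpr hN.ne'
  have h1 := filter_step s n N j hN hj
  rw [sum_step s n N j hs hn hN hodd] at h1
  have h3 : ∀ r ∈ Finset.Icc 1 (N/2), (-2*Complex.I)^(s*n) *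
      (Complex.exp ((xr s n N j r : ℝ)*Complex.I) + Complex.exp (-(xr s n N j r : ℝ)*Complex.I)) *
        P s n N r
      = 2*(2*Complex.I)^(s*n) *
        (((Real.cos (Real.pi*r*(2*(j:ℝ) - (Nsn s n : ℝ))/N) : ℝ):ℂ) * P s n N r) := by
    intro r _
    rw [exp_add_exp_neg (xr s n N j r)]
    rw [show Real.pi*r*(2*(j:ℝ) - (Nsn s n : ℝ))/N = -(xr s n N j r) from by rw [xr]; ring,
      Real.cos_neg]
    rw [show ((-2*Complex.I):ℂ)^(s*n) = (2*Complex.I)^(s*n) from by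
      rw [show ((-2*Complex.I):ℂ) = -(2*Complex.I) from by ring, hodd.neg_pow]]
    ring
  rw [Finset.sum_congr rfl h3, ← Finset.mul_sum] at h1
  simp only [P] at h1
  rw [div_mul_eq_mul_div, eq_div_iff hNC]
  rw [mul_comm ((N:ℂ)) _] at h1
  rw [← h1]
end

section
/- Let s and n be positive integers with s·n odd, and let N′ be a positive divisor of N_{s,n} = s·n(n+1)/2. Then Σ_{ℓ=0}^{N_{s,n}/N′} t_{ℓN′, s, n} = 0; that is, the sum of the coefficients of ∏_{j=1}^{n}(1−q^j)^s at exponents that are multiples of N′ vanishes. -/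
lemma natDegree_factor (j s : ℕ) : ((1 - Polynomial.X ^ j : Polynomial ℤ) ^ s).natDegree ≤ s * j := by
  calc ((1 - Polynomial.X ^ j : Polynomial ℤ) ^ s).natDegree
      ≤ s * (1 - Polynomial.X ^ j : Polynomial ℤ).natDegree := Polynomial.natDegree_pow_le
    _ ≤ s * j := by
        gcongr
        refine (Polynomial.natDegree_sub_le _ _).trans ?_
        simp [Polynomial.natDegree_X_pow]

lemma reflect_factor (j : ℕ) :
    Polynomial.reflect j (1 - Polynomial.X ^ j : Polynomial ℤ) = Polynomial.X ^ j - 1 := by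
  rw [show (1 - Polynomial.X ^ j : Polynomial ℤ) = Polynomial.X ^ 0 - Polynomial.X ^ j by simp]
  rw [Polynomial.reflect_sub, Polynomial.reflect_monomial, Polynomial.reflect_monomial]
  simp [Polynomial.revAt_le]

lemma reflect_pow_factor (j s : ℕ) :
    Polynomial.reflect (s * j) ((1 - Polynomial.X ^ j : Polynomial ℤ) ^ s)
      = (Polynomial.X ^ j - 1) ^ s := by
  induction s with
  | zero => simp
  | succ t ih =>
      rw [pow_succ, pow_succ, Nat.succ_mul,
        Polynomial.reflect_mul _ _ (natDegree_factor j t) ?_, ih, reflect_factor]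
      refine (Polynomial.natDegree_sub_le _ _).trans ?_
      simp [Polynomial.natDegree_X_pow]

lemma reflect_T_aux (s n : ℕ) :
    Polynomial.reflect (∑ j ∈ Finset.Icc 1 n, s * j) (T s n)
      = ∏ j ∈ Finset.Icc 1 n, (Polynomial.X ^ j - 1) ^ s := by
  induction n with
  | zero => simp [T]
  | succ m ih =>
      rw [T, Finset.sum_Icc_succ_top (by omega), Finset.prod_Icc_succ_top (by omega),
        Finset.prod_Icc_succ_top (by omega)]
      rw [Polynomial.reflect_mul _ _ (Polynomial.natDegree_prod_le _ _ |>.trans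
          (Finset.sum_le_sum fun j _ => natDegree_factor j s)) (natDegree_factor _ s)]
      rw [show (∏ j ∈ Finset.Icc 1 m, (1 - Polynomial.X ^ j) ^ s : Polynomial ℤ) = T s m from rfl, ih]
      congr 1
      exact reflect_pow_factor (m+1) s

lemma sum_Icc_eq (n : ℕ) : (∑ j ∈ Finset.Icc 1 n, j) * 2 = n * (n + 1) := by
  induction n with
  | zero => simp
  | succ m ih => rw [Finset.sum_Icc_succ_top (by omega), add_mul, ih]; ring

lemma reflect_T (s n : ℕ) (hodd : Odd (s * n)) :
    Polynomial.reflect (Nsn s n) (T s n) = - T s n := by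
  have hsum : ∑ j ∈ Finset.Icc 1 n, s * j = Nsn s n := by
    rw [← Finset.mul_sum, Nsn]
    have h2 := sum_Icc_eq n
    have h3 : s * n * (n + 1) = (s * ∑ j ∈ Finset.Icc 1 n, j) * 2 := by
      rw [mul_assoc, ← h2]; ring
    rw [h3, Nat.mul_div_cancel _ two_pos]
  rw [← hsum, reflect_T_aux]
  have h1 : ∀ j ∈ Finset.Icc 1 n, ((Polynomial.X : Polynomial ℤ) ^ j - 1) ^ s
      = (-1 : Polynomial ℤ) ^ s * (1 - Polynomial.X ^ j) ^ s := by
    intro j _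
    rw [← neg_pow, neg_sub]
  rw [Finset.prod_congr rfl h1, Finset.prod_mul_distrib, Finset.prod_const, Nat.card_Icc,
    ← pow_mul, Nat.add_sub_cancel, hodd.neg_one_pow, T]
  ring

/-- Theorem (main000, second part): if `s·n` is odd and `N' ∣ N_{s,n}`, then
`Σ_{ℓ=0}^{N_{s,n}/N'} t_{ℓ N', s, n} = 0`. -/
theorem stmt4 (s n N' : ℕ) (hs : 0 < s) (hn : 0 < n) (hN' : 0 < N') (hodd : Odd (s * n))
    (hdvd : N' ∣ Nsn s n) :
    ∑ l ∈ Finset.range (Nsn s n / N' + 1), (T s n).coeff (l * N') = 0 := by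
  set K := Nsn s n / N' with hK
  have hKN : K * N' = Nsn s n := Nat.div_mul_cancel hdvd
  have key : ∀ l ≤ K, (T s n).coeff ((K - l) * N') = - (T s n).coeff (l * N') := by
    intro l hl
    have h1 : (K - l) * N' = Nsn s n - l * N' := by
      rw [Nat.sub_mul, hKN]
    have h2 : l * N' ≤ Nsn s n := by
      rw [← hKN]; exact Nat.mul_le_mul_right _ hl
    have := congrArg (fun p => Polynomial.coeff p (l * N')) (reflect_T s n hodd)
    simpa [Polynomial.coeff_reflect, Polynomial.revAt_le h2, h1] using this
  have hrev : ∑ l ∈ Finset.range (K + 1), (T s n).coeff ((K - l) * N')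
      = ∑ l ∈ Finset.range (K + 1), (T s n).coeff (l * N') := by
    rw [← Finset.sum_range_reflect]
    apply Finset.sum_congr rfl
    intro l hl
    simp only [Finset.mem_range] at hl
    congr 2
    omega
  have : ∑ l ∈ Finset.range (K + 1), (T s n).coeff (l * N')
      = - ∑ l ∈ Finset.range (K + 1), (T s n).coeff (l * N') := by
    conv_lhs => rw [← hrev]
    rw [← Finset.sum_neg_distrib]
    apply Finset.sum_congr rfl
    intro l hl
    simp only [Finset.mem_range] at hl
    exact key l (by omega)
  omega
end
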